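/- Every infinite orbit of an element g ∈ H_n is almost equal to X_{i,r}(g) ∪ X_{j,s}(g) for some indices i ≠ j in {1,…,n} with t_i(g) ≠ 0 and t_j(g) ≠ 0, and some r, s with 0 ≤ r < |t_i(g)| and 0 ≤ s < |t_j(g)|. -/

import Mathlib

namespace HoughtonPaper

/-- The set `X_n = {1,…,n} × ℕ` (rays indexed by `Fin n`). -/
abbrev X (n : ℕ) := Fin n × ℕ

/-- `g` acts as the translation by `t i` on the ray `i` from the point `z` on. -/
def EvTransFrom {n : ℕ} (g : Equiv.Perm (X n)) (t : Fin n → ℤ) (z : ℕ) : Prop :=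
  ∀ (i : Fin n) (m : ℕ), z ≤ m →
    (g (i, m)).1 = i ∧ ((g (i, m)).2 : ℤ) = (m : ℤ) + t i

/-- `g` is eventually a translation with translation vector `t`. -/
def EvTrans {n : ℕ} (g : Equiv.Perm (X n)) (t : Fin n → ℤ) : Prop :=
  ∃ z : ℕ, EvTransFrom g t z

/-- Membership in Houghton's group `H_n`. -/
def InH {n : ℕ} (g : Equiv.Perm (X n)) : Prop :=
  ∃ t : Fin n → ℤ, EvTrans g t

/-- Support of a permutation. -/
def supp {α : Type*} (g : Equiv.Perm α) : Set α := {x | g x ≠ x}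

/-- Membership in `FSym(X_n)`, the finitely supported permutations. -/
def InFSym {n : ℕ} (g : Equiv.Perm (X n)) : Prop := (supp g).Finite

/-- Two sets are almost equal if their symmetric difference is finite. -/
def AlmostEq {α : Type*} (A B : Set α) : Prop := (symmDiff A B).Finite

/-- The set `X_{i,r}(g) = {(i,m) : m ≡ r mod |t_i(g)|}`, for `t` the translation vector. -/
def Xir {n : ℕ} (i : Fin n) (t : Fin n → ℤ) (r : ℕ) : Set (X n) :=
  {p : X n | p.1 = i ∧ p.2 % (t i).natAbs = r}

/-- Forward orbit `{(i,m)g^k : k ≥ 0}`. -/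
def fwdOrbit {n : ℕ} (g : Equiv.Perm (X n)) (p : X n) : Set (X n) :=
  Set.range fun k : ℕ => (g ^ k) p

/-- The orbit `{x g^k : k ∈ ℤ}`. -/
def orbit {n : ℕ} (g : Equiv.Perm (X n)) (p : X n) : Set (X n) :=
  Set.range fun k : ℤ => (g ^ k) p

/-- `A` is an infinite orbit of `g`. -/
def IsInfOrbit {n : ℕ} (g : Equiv.Perm (X n)) (A : Set (X n)) : Prop :=
  (∃ p : X n, A = orbit g p) ∧ A.Infinite

/-- The generating relation of `∼_g`: some infinite orbit of `g` is almost equal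
to `X_{i,r}(g) ∪ X_{j,s}(g)`. -/
def BaseRel {n : ℕ} (g : Equiv.Perm (X n)) (t : Fin n → ℤ) (i j : Fin n) : Prop :=
  ∃ r s : ℕ, r < (t i).natAbs ∧ s < (t j).natAbs ∧
    ∃ A : Set (X n), IsInfOrbit g A ∧ AlmostEq A (Xir i t r ∪ Xir j t s)

/-- The equivalence relation `∼_g` on the rays, generated by `BaseRel`. -/
def SimRel {n : ℕ} (g : Equiv.Perm (X n)) (t : Fin n → ℤ) : Fin n → Fin n → Prop :=
  Relation.EqvGen (BaseRel g t)

def genFun {n : ℕ} [NeZero n] (i : Fin n) : X n → X n :=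
  fun p =>
    if p.1 = 0 then ((0 : Fin n), p.2 + 1)
    else if p.1 = i then (if p.2 = 0 then ((0 : Fin n), 0) else (i, p.2 - 1))
    else p

def genInvFun {n : ℕ} [NeZero n] (i : Fin n) : X n → X n :=
  fun p =>
    if p.1 = 0 then (if p.2 = 0 then (i, 0) else ((0 : Fin n), p.2 - 1))
    else if p.1 = i then (i, p.2 + 1)
    else p

/-- The generator `g_i` of Houghton's group (ray `1` of the paper is ray `0` here). -/
def gen {n : ℕ} [NeZero n] (i : Fin n) (hi : i ≠ 0) : Equiv.Perm (X n) where
  toFun := genFun i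
  invFun := genInvFun i
  left_inv := by
    rintro ⟨j, m⟩
    by_cases hj : j = 0
    · subst hj
      simp [genFun, genInvFun]
    · by_cases hji : j = i
      · subst hji
        rcases Nat.eq_zero_or_pos m with hm | hm
        · subst hm; simp [genFun, genInvFun, hi]
        · simp [genFun, genInvFun, hi, hm.ne', Nat.sub_add_cancel hm]
      · simp [genFun, genInvFun, hj, hji]
  right_inv := by
    rintro ⟨j, m⟩
    by_cases hj : j = 0
    · subst hj
      rcases Nat.eq_zero_or_pos m with hm | hm
      · subst hm; simp [genFun, genInvFun, hi]
      · simp [genFun, genInvFun, hm.ne', hi.symm, Nat.sub_add_cancel hm]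
    · by_cases hji : j = i
      · subst hji
        simp [genFun, genInvFun, hj]
      · simp [genFun, genInvFun, hj, hji]

/-- The transposition `τ` exchanging `(1,0)` and `(2,0)` (here `(0,0)` and `(1,0)`). -/
def tau (n : ℕ) [NeZero n] : Equiv.Perm (X n) :=
  Equiv.swap ((0 : Fin n), 0) ((1 : Fin n), 0)

/-- Letters of the alphabet `{g_2,…,g_n}^{±1}`. -/
abbrev Letter (n : ℕ) [NeZero n] := {i : Fin n // i ≠ 0} × Bool

/-- Words over `{g_2,…,g_n}^{±1}`. -/
abbrev Word (n : ℕ) [NeZero n] := List (Letter n)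

def evalLetter {n : ℕ} [NeZero n] (l : Letter n) : Equiv.Perm (X n) :=
  if l.2 then gen l.1.1 l.1.2 else (gen l.1.1 l.1.2)⁻¹

/-- The element of `Sym(X_n)` represented by a word. -/
def wordProd {n : ℕ} [NeZero n] (w : Word n) : Equiv.Perm (X n) :=
  (w.map evalLetter).prod

end HoughtonPaper

open HoughtonPaper

lemma orbit_inj' {α : Type*} (g : Equiv.Perm α) (p : α)
    (h : (Set.range fun k : ℤ => (g ^ k) p).Infinite) :
    Function.Injective (fun k : ℤ => (g ^ k) p) := by
  by_contra hni
  simp only [Function.Injective, not_forall] at hni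
  obtain ⟨a, b, hab, hne⟩ := hni
  have key : ∀ a b : ℤ, (g ^ a) p = (g ^ b) p → (g ^ (a - b)) p = p := by
    intro a b hab
    have h1 : (g ^ (-b)) ((g ^ a) p) = (g ^ (-b)) ((g ^ b) p) := by rw [hab]
    have h2 : (g ^ (-b)) ((g ^ b) p) = p := by
      rw [← Equiv.Perm.mul_apply, ← zpow_add]; simp
    rw [h2, ← Equiv.Perm.mul_apply, ← zpow_add] at h1
    rwa [show -b + a = a - b by ring] at h1
  obtain ⟨d, hd0, hdp⟩ : ∃ d : ℤ, 0 < d ∧ (g ^ d) p = p := by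
    rcases lt_or_gt_of_ne hne with h' | h'
    · exact ⟨b - a, by omega, key b a hab.symm⟩
    · exact ⟨a - b, by omega, key a b hab⟩
  have hfix : ∀ m : ℤ, (g ^ (d * m)) p = p := by
    intro m
    rw [zpow_mul]
    exact Equiv.Perm.zpow_apply_eq_self_of_apply_eq_self hdp m
  have hsub : (Set.range fun k : ℤ => (g ^ k) p) ⊆
      (fun k : ℤ => (g ^ k) p) '' Set.Ico 0 d := by
    rintro x ⟨k, rfl⟩
    refine ⟨k % d, ⟨Int.emod_nonneg k hd0.ne', Int.emod_lt_of_pos k hd0⟩, ?_⟩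
    have h3 : (g ^ (k % d + d * (k / d))) p = (g ^ (k % d)) p := by
      rw [zpow_add, Equiv.Perm.mul_apply, hfix]
    simpa [Int.emod_add_mul_ediv k d] using h3.symm
  exact h (((Set.finite_Ico 0 d).image _).subset hsub)

theorem statement4 (n : ℕ) (hn : 2 ≤ n) (g : Equiv.Perm (X n)) (t : Fin n → ℤ)
    (hg : EvTrans g t) (A : Set (X n)) (hA : IsInfOrbit g A) :
    ∃ i j : Fin n, i ≠ j ∧ t i ≠ 0 ∧ t j ≠ 0 ∧
      ∃ r s : ℕ, r < (t i).natAbs ∧ s < (t j).natAbs ∧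
        AlmostEq A (Xir i t r ∪ Xir j t s) := by
  obtain ⟨z, htr⟩ := hg
  obtain ⟨⟨p, rfl⟩, hInf⟩ := hA
  set q : ℤ → X n := fun k => (g ^ k) p with hqdef
  have horb : orbit g p = Set.range q := rfl
  have hinj : Function.Injective q := orbit_inj' g p hInf
  -- step lemma
  have hstep : ∀ k : ℤ, z ≤ (q k).2 →
      (q (k + 1)).1 = (q k).1 ∧ ((q (k + 1)).2 : ℤ) = ((q k).2 : ℤ) + t (q k).1 := by
    intro k hk
    have hs : q (k + 1) = g (q k) := by
      show (g ^ (k+1)) p = g ((g ^ k) p)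
      rw [show k + 1 = 1 + k by ring, zpow_add, zpow_one, Equiv.Perm.mul_apply]
    rw [hs]
    simpa using htr (q k).1 (q k).2 hk
  -- finite low region
  have hlow : ∀ C : ℕ, {x : X n | x.2 < C}.Finite := by
    intro C
    have hss : {x : X n | x.2 < C} ⊆ (Set.univ : Set (Fin n)) ×ˢ Set.Iio C := by
      rintro ⟨i, m⟩ h; exact ⟨trivial, h⟩
    exact (Set.finite_univ.prod (Set.finite_Iio C)).subset hss
  have hF : {k : ℤ | (q k).2 < z}.Finite := by
    have : {k : ℤ | (q k).2 < z} = q ⁻¹' {x : X n | x.2 < z} := rfl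
    rw [this]
    exact (hlow z).preimage hinj.injOn
  obtain ⟨b, hb⟩ := hF.bddAbove
  obtain ⟨c, hc⟩ := hF.bddBelow
  set Kp : ℤ := b + 1 with hKp
  set Km : ℤ := c - 1 with hKm
  have hzp : ∀ k : ℤ, Kp ≤ k → z ≤ (q k).2 := by
    intro k hk
    by_contra h
    have := hb (show k ∈ {k : ℤ | (q k).2 < z} by simpa using Nat.lt_of_not_le h)
    omega
  have hzm : ∀ k : ℤ, k ≤ Km → z ≤ (q k).2 := by
    intro k hk
    by_contra h
    have := hc (show k ∈ {k : ℤ | (q k).2 < z} by simpa using Nat.lt_of_not_le h)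
    omega
  set i : Fin n := (q Kp).1 with hidef
  set m0 : ℕ := (q Kp).2 with hm0def
  set j : Fin n := (q Km).1 with hjdef
  set m1 : ℕ := (q Km).2 with hm1def
  -- forward formula
  have Fp : ∀ d : ℕ, (q (Kp + d)).1 = i ∧ ((q (Kp + d)).2 : ℤ) = (m0 : ℤ) + d * t i := by
    intro d
    induction d with
    | zero => simp; exact ⟨rfl, rfl⟩
    | succ d ih =>
      have h1 := hstep (Kp + d) (hzp _ (by omega))
      have e : (Kp + ((d : ℕ) + 1 : ℕ) : ℤ) = (Kp + d) + 1 := by push_cast; ring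
      rw [e]
      refine ⟨by rw [h1.1, ih.1], ?_⟩
      rw [h1.2, ih.1, ih.2]; push_cast; ring
  -- backward formula
  have Fm : ∀ d : ℕ, (q (Km - d)).1 = j ∧ ((q (Km - d)).2 : ℤ) = (m1 : ℤ) - d * t j := by
    intro d
    induction d with
    | zero => simp; exact ⟨rfl, rfl⟩
    | succ d ih =>
      have h1 := hstep (Km - ((d : ℕ) + 1 : ℕ)) (hzm _ (by push_cast; omega))
      have e : (Km - ((d : ℕ) + 1 : ℕ) : ℤ) + 1 = Km - d := by push_cast; ring
      rw [e] at h1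
      have hfst : (q (Km - ((d : ℕ) + 1 : ℕ))).1 = j := h1.1.symm.trans ih.1
      refine ⟨hfst, ?_⟩
      have h2 := h1.2
      rw [hfst, ih.2] at h2
      push_cast
      push_cast at h2
      linarith
  -- t i > 0
  have hti : 0 < t i := by
    by_contra hns
    push_neg at hns
    rcases hns.lt_or_eq with h0 | h0
    · have h1 := Fp (m0 + 1)
      have hge : (0 : ℤ) ≤ ((q (Kp + ((m0 + 1 : ℕ) : ℤ))).2 : ℤ) := Int.natCast_nonneg _
      rw [h1.2] at hge
      have h2 : ((m0 : ℤ) + 1) * t i ≤ ((m0 : ℤ) + 1) * (-1) :=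
        mul_le_mul_of_nonneg_left (by omega) (by positivity)
      push_cast at hge
      nlinarith
    · have h1 := Fp 1
      have heq : q (Kp + 1) = q Kp := by
        apply Prod.ext
        · rw [show ((1:ℕ):ℤ) = (1:ℤ) from rfl] at h1
          exact h1.1
        · have h2 := h1.2
          rw [h0] at h2
          simp at h2
          exact_mod_cast h2
      have := hinj heq
      omega
  -- t j < 0
  have htj : t j < 0 := by
    by_contra hns
    push_neg at hns
    rcases hns.lt_or_eq with h0 | h0
    · have h1 := Fm (m1 + 1)
      have hge : (0 : ℤ) ≤ ((q (Km - ((m1 + 1 : ℕ) : ℤ))).2 : ℤ) := Int.natCast_nonneg _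
      rw [h1.2] at hge
      have h2 : ((m1 : ℤ) + 1) * 1 ≤ ((m1 : ℤ) + 1) * t j :=
        mul_le_mul_of_nonneg_left (by omega) (by positivity)
      push_cast at hge
      nlinarith
    · have h1 := Fm 1
      have heq : q (Km - 1) = q Km := by
        apply Prod.ext
        · rw [show ((1:ℕ):ℤ) = (1:ℤ) from rfl] at h1
          exact h1.1
        · have h2 := h1.2
          rw [← h0] at h2
          simp at h2
          exact_mod_cast h2
      have := hinj heq
      omega
  have hij : i ≠ j := fun h => by rw [h] at hti; omega
  set di : ℕ := (t i).natAbs with hdidef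
  set dj : ℕ := (t j).natAbs with hdjdef
  have hdi : (di : ℤ) = t i := Int.natAbs_of_nonneg hti.le
  have hdj : (dj : ℤ) = -t j := by
    rw [hdjdef, ← Int.natAbs_neg]
    exact Int.natAbs_of_nonneg (by omega)
  have hdi0 : 0 < di := Int.natAbs_pos.mpr hti.ne'
  have hdj0 : 0 < dj := Int.natAbs_pos.mpr htj.ne
  set r : ℕ := m0 % di with hrdef
  set s : ℕ := m1 % dj with hsdef
  -- natural-number forms of the formulas
  have FpN : ∀ d : ℕ, (q (Kp + d)).2 = m0 + d * di := by
    intro d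
    have h1 : ((q (Kp + d)).2 : ℤ) = ((m0 + d * di : ℕ) : ℤ) := by
      rw [(Fp d).2, ← hdi]; push_cast; ring
    exact_mod_cast h1
  have FmN : ∀ d : ℕ, (q (Km - d)).2 = m1 + d * dj := by
    intro d
    have h1 : ((q (Km - d)).2 : ℤ) = ((m1 + d * dj : ℕ) : ℤ) := by
      rw [(Fm d).2]; push_cast; rw [hdj]; ring
    exact_mod_cast h1
  -- tails are in the Xir sets
  have tail_i : ∀ d : ℕ, q (Kp + d) ∈ Xir i t r ∧ m0 ≤ (q (Kp + d)).2 := by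
    intro d
    refine ⟨⟨(Fp d).1, ?_⟩, by rw [FpN d]; omega⟩
    show (q (Kp + d)).2 % di = r
    rw [FpN d, Nat.add_mul_mod_self_right]
  have tail_j : ∀ d : ℕ, q (Km - d) ∈ Xir j t s ∧ m1 ≤ (q (Km - d)).2 := by
    intro d
    refine ⟨⟨(Fm d).1, ?_⟩, by rw [FmN d]; omega⟩
    show (q (Km - d)).2 % dj = s
    rw [FmN d, Nat.add_mul_mod_self_right]
  -- the congruence classes above the thresholds are in the orbit
  have sub_i : ∀ m : ℕ, m0 ≤ m → m % di = r → ((i, m) : X n) ∈ Set.range q := by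
    intro m hm hmod
    have hdvd : di ∣ m - m0 := (Nat.modEq_iff_dvd' hm).mp (hmod.symm ▸ rfl : m0 % di = m % di)
    obtain ⟨cc, hcc⟩ := hdvd
    refine ⟨Kp + cc, ?_⟩
    apply Prod.ext
    · exact (Fp cc).1
    · show (q (Kp + cc)).2 = m
      rw [FpN cc, Nat.mul_comm cc di]
      omega
  have sub_j : ∀ m : ℕ, m1 ≤ m → m % dj = s → ((j, m) : X n) ∈ Set.range q := by
    intro m hm hmod
    have hdvd : dj ∣ m - m1 := (Nat.modEq_iff_dvd' hm).mp (hmod.symm ▸ rfl : m1 % dj = m % dj)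
    obtain ⟨cc, hcc⟩ := hdvd
    refine ⟨Km - cc, ?_⟩
    apply Prod.ext
    · exact (Fm cc).1
    · show (q (Km - cc)).2 = m
      rw [FmN cc, Nat.mul_comm cc dj]
      omega
  -- assemble
  refine ⟨i, j, hij, hti.ne', htj.ne, r, s, Nat.mod_lt _ hdi0, Nat.mod_lt _ hdj0, ?_⟩
  have hsub : symmDiff (orbit g p) (Xir i t r ∪ Xir j t s) ⊆
      (q '' Set.Icc Km Kp) ∪ {x : X n | x.2 < m0} ∪ {x : X n | x.2 < m1} := by
    intro x hx
    rw [Set.mem_symmDiff] at hx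
    rcases hx with ⟨hxA, hxB⟩ | ⟨hxB, hxA⟩
    · obtain ⟨k, rfl⟩ := hxA
      rcases le_or_gt Kp k with hk | hk
      · exfalso
        have he : Kp + ((k - Kp).toNat : ℤ) = k := by omega
        have := (tail_i (k - Kp).toNat).1
        rw [he] at this
        exact hxB (Or.inl this)
      rcases le_or_gt k Km with hk' | hk'
      · exfalso
        have he : Km - ((Km - k).toNat : ℤ) = k := by omega
        have := (tail_j (Km - k).toNat).1
        rw [he] at this
        exact hxB (Or.inr this)
      · exact Or.inl (Or.inl ⟨k, ⟨by omega, by omega⟩, rfl⟩)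
    · rcases hxB with hx1 | hx1
      · obtain ⟨hfst, hmod⟩ := hx1
        rcases lt_or_ge x.2 m0 with h | h
        · exact Or.inl (Or.inr h)
        · exfalso
          apply hxA
          have : ((i, x.2) : X n) ∈ Set.range q := sub_i x.2 h hmod
          rwa [← hfst, Prod.mk.eta] at this
      · obtain ⟨hfst, hmod⟩ := hx1
        rcases lt_or_ge x.2 m1 with h | h
        · exact Or.inr h
        · exfalso
          apply hxA
          have : ((j, x.2) : X n) ∈ Set.range q := sub_j x.2 h hmod
          rwa [← hfst, Prod.mk.eta] at this
  exact Set.Finite.subset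
    ((((Set.finite_Icc Km Kp).image q).union (hlow m0)).union (hlow m1)) hsub
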